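/- Let A be a 2×2 real symmetric positive definite matrix and let k₀ ≥ 2 be an integer. Let g : ℕ → ℝ² and α : ℕ → ℝ satisfy g_{j+1} = (I − α_j A)g_j for all j, with the BB1 stepsize α_j = ⟨g_{j-1}, g_{j-1}⟩/⟨g_{j-1}, A g_{j-1}⟩ for every j with 1 ≤ j ≤ k₀+2 and j ≠ k₀ (α₀ arbitrary). Suppose g_j ≠ 0 for all 0 ≤ j ≤ k₀+2, and let q ∈ ℝ², q ≠ 0, satisfy (I − α_{k₀-2} A)q = g_{k₀-2}. Set α_{k₀} = 2/( ⟨q,Aq⟩/‖q‖² + ⟨g_{k₀},Ag_{k₀}⟩/‖g_{k₀}‖² + √( (⟨q,Aq⟩/‖q‖² − ⟨g_{k₀},Ag_{k₀}⟩/‖g_{k₀}‖²)² + 4⟨q, A g_{k₀}⟩²/(‖q‖²·‖g_{k₀}‖²) ) ). Then g_{k₀+3} = 0. -/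

import Mathlib

open Matrix

private lemma span2 {q G x : Fin 2 → ℝ} (hq : q ≠ 0) (hG : G ≠ 0)
    (hqG : q ⬝ᵥ G = 0) (hqx : q ⬝ᵥ x = 0) (hGx : G ⬝ᵥ x = 0) : x = 0 := by
  simp only [dotProduct, Fin.sum_univ_two] at hqG hqx hGx
  have hq2 : 0 < q 0 ^ 2 + q 1 ^ 2 := by
    rcases Function.ne_iff.1 hq with ⟨i, hi⟩
    fin_cases i <;> simp at hi <;> positivity
  have hG2 : 0 < G 0 ^ 2 + G 1 ^ 2 := by
    rcases Function.ne_iff.1 hG with ⟨i, hi⟩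
    fin_cases i <;> simp at hi <;> positivity
  have hD : G 0 * x 1 - G 1 * x 0 = 0 := by
    have h1 : (q 0 ^ 2 + q 1 ^ 2) * (G 0 * x 1 - G 1 * x 0) = 0 := by
      linear_combination (q 0 * x 1 - q 1 * x 0) * hqG - (q 0 * G 1 - q 1 * G 0) * hqx
    exact (mul_eq_zero.1 h1).resolve_left hq2.ne'
  funext i
  fin_cases i
  · have h2 : (G 0 ^ 2 + G 1 ^ 2) * x 0 = 0 := by
      linear_combination G 0 * hGx - G 1 * hD
    simpa using (mul_eq_zero.1 h2).resolve_left hG2.ne'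
  · have h2 : (G 0 ^ 2 + G 1 ^ 2) * x 1 = 0 := by
      linear_combination G 1 * hGx + G 0 * hD
    simpa using (mul_eq_zero.1 h2).resolve_left hG2.ne'

private lemma dp_self_pos {x : Fin 2 → ℝ} (hx : x ≠ 0) : 0 < x ⬝ᵥ x := by
  rcases Function.ne_iff.1 hx with ⟨i, hi⟩
  simp only [dotProduct, Fin.sum_univ_two]
  fin_cases i <;> simp at hi <;>
    [nlinarith [mul_self_pos.2 hi, mul_self_nonneg (x 1)];
     nlinarith [mul_self_pos.2 hi, mul_self_nonneg (x 0)]]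

private lemma expand2 {q G : Fin 2 → ℝ} (hq : q ≠ 0) (hG : G ≠ 0)
    (hqG : q ⬝ᵥ G = 0) (v : Fin 2 → ℝ) :
    v = ((q ⬝ᵥ v) / (q ⬝ᵥ q)) • q + ((G ⬝ᵥ v) / (G ⬝ᵥ G)) • G := by
  have hp : q ⬝ᵥ q ≠ 0 := (dp_self_pos hq).ne'
  have hr : G ⬝ᵥ G ≠ 0 := (dp_self_pos hG).ne'
  have hGq : G ⬝ᵥ q = 0 := by rwa [dotProduct_comm]
  have h0 : v - (((q ⬝ᵥ v) / (q ⬝ᵥ q)) • q + ((G ⬝ᵥ v) / (G ⬝ᵥ G)) • G) = 0 := by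
    refine span2 hq hG hqG ?_ ?_
    · rw [dotProduct_sub, dotProduct_add, dotProduct_smul, dotProduct_smul, hqG,
        smul_eq_mul, smul_eq_mul, div_mul_cancel₀ _ hp]
      ring
    · rw [dotProduct_sub, dotProduct_add, dotProduct_smul, dotProduct_smul, hGq,
        smul_eq_mul, smul_eq_mul, div_mul_cancel₀ _ hr]
      ring
  exact sub_eq_zero.mp h0

/-- Theorem 1 specialized to `Ψ(A) = I` (the BB1 method) with the inserted
stepsize `α̃_{k₀}^{BB1}` of (newsbb1): finite termination `g_{k₀+3} = 0`. -/
theorem finite_termination_BB1 {A : Matrix (Fin 2) (Fin 2) ℝ}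
    (hA : A.PosDef) (k₀ : ℕ) (hk₀ : 2 ≤ k₀)
    (g : ℕ → Fin 2 → ℝ) (α : ℕ → ℝ)
    (hrec : ∀ j, g (j + 1) = g j - α j • (A *ᵥ g j))
    (hstep : ∀ j, 1 ≤ j → j ≤ k₀ + 2 → j ≠ k₀ →
      α j = (g (j - 1) ⬝ᵥ g (j - 1)) / (g (j - 1) ⬝ᵥ (A *ᵥ g (j - 1))))
    (hgne : ∀ j, j ≤ k₀ + 2 → g j ≠ 0)
    (q : Fin 2 → ℝ) (hq0 : q ≠ 0)
    (hq : q - α (k₀ - 2) • (A *ᵥ q) = g (k₀ - 2))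
    (hαk₀ : α k₀ = 2 /
      ((q ⬝ᵥ (A *ᵥ q)) / (q ⬝ᵥ q) + (g k₀ ⬝ᵥ (A *ᵥ g k₀)) / (g k₀ ⬝ᵥ g k₀) +
        Real.sqrt (((q ⬝ᵥ (A *ᵥ q)) / (q ⬝ᵥ q) -
            (g k₀ ⬝ᵥ (A *ᵥ g k₀)) / (g k₀ ⬝ᵥ g k₀)) ^ 2 +
          4 * (q ⬝ᵥ (A *ᵥ g k₀)) ^ 2 / ((q ⬝ᵥ q) * (g k₀ ⬝ᵥ g k₀))))) :
    g (k₀ + 3) = 0 := by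
  obtain ⟨m, rfl⟩ : ∃ m, k₀ = m + 2 := ⟨k₀ - 2, by omega⟩
  have hsym : ∀ x y : Fin 2 → ℝ, x ⬝ᵥ (A *ᵥ y) = y ⬝ᵥ (A *ᵥ x) := fun x y => by
    rw [dotProduct_mulVec, dotProduct_comm, ← mulVec_transpose,
      show Aᵀ = A by simpa using hA.1.eq]
  have hpos : ∀ x : Fin 2 → ℝ, x ≠ 0 → 0 < x ⬝ᵥ (A *ᵥ x) := fun x hx => by
    simpa using hA.dotProduct_mulVec_pos hx
  -- basic nonvanishing
  have hgm : g m ≠ 0 := hgne m (by omega)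
  have hGne : g (m + 2) ≠ 0 := hgne (m + 2) (by omega)
  have hhne : g (m + 3) ≠ 0 := hgne (m + 3) (by omega)
  -- rewrite hq
  have hq' : q - α m • (A *ᵥ q) = g m := by simpa using hq
  -- BB1 step at m+1
  have hα1 : α (m + 1) = (g m ⬝ᵥ g m) / (g m ⬝ᵥ (A *ᵥ g m)) := by
    have := hstep (m + 1) (by omega) (by omega) (by omega)
    simpa using this
  -- orthogonality q ⊥ g (m+2)
  have e1 : q ⬝ᵥ g (m + 1) = g m ⬝ᵥ g m := by
    calc q ⬝ᵥ g (m + 1) = q ⬝ᵥ g m - α m * (g m ⬝ᵥ (A *ᵥ q)) := by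
          rw [hrec m, dotProduct_sub, dotProduct_smul, smul_eq_mul, hsym]
      _ = g m ⬝ᵥ (q - α m • (A *ᵥ q)) := by
          rw [dotProduct_sub, dotProduct_smul, smul_eq_mul, dotProduct_comm]
      _ = g m ⬝ᵥ g m := by rw [hq']
  have e2 : q ⬝ᵥ (A *ᵥ g (m + 1)) = g m ⬝ᵥ (A *ᵥ g m) := by
    have comm2 : (A *ᵥ g m) ⬝ᵥ (A *ᵥ q) = g m ⬝ᵥ (A *ᵥ (A *ᵥ q)) := by
      rw [hsym (g m) (A *ᵥ q), dotProduct_comm]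
    calc q ⬝ᵥ (A *ᵥ g (m + 1)) = g (m + 1) ⬝ᵥ (A *ᵥ q) := hsym _ _
      _ = g m ⬝ᵥ (A *ᵥ q) - α m * ((A *ᵥ g m) ⬝ᵥ (A *ᵥ q)) := by
          rw [hrec m, sub_dotProduct, smul_dotProduct, smul_eq_mul]
      _ = g m ⬝ᵥ (A *ᵥ (q - α m • (A *ᵥ q))) := by
          rw [mulVec_sub, mulVec_smul, dotProduct_sub, dotProduct_smul, smul_eq_mul, comm2]
      _ = g m ⬝ᵥ (A *ᵥ g m) := by rw [hq']
  have hAgm : g m ⬝ᵥ (A *ᵥ g m) ≠ 0 := (hpos _ hgm).ne'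
  have hort : q ⬝ᵥ g (m + 2) = 0 := by
    rw [hrec (m + 1), dotProduct_sub, dotProduct_smul, smul_eq_mul, e1, e2, hα1,
      div_mul_cancel₀ _ hAgm, sub_self]
  -- notation
  set G := g (m + 2) with hGdef
  set p := q ⬝ᵥ q with hpdef
  set r := G ⬝ᵥ G with hrdef
  set aq := q ⬝ᵥ (A *ᵥ q) with haqdef
  set bg := G ⬝ᵥ (A *ᵥ G) with hbgdef
  set t := q ⬝ᵥ (A *ᵥ G) with htdef
  have hp : 0 < p := dp_self_pos hq0
  have hr : 0 < r := dp_self_pos hGne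
  have haq : 0 < aq := hpos _ hq0
  have hbg : 0 < bg := hpos _ hGne
  have htsym : G ⬝ᵥ (A *ᵥ q) = t := hsym _ _
  -- expansions in the orthogonal basis {q, G}
  have hAG : A *ᵥ G = (t / p) • q + (bg / r) • G := by
    have := expand2 hq0 hGne hort (A *ᵥ G)
    rwa [← htdef, ← hbgdef, ← hpdef, ← hrdef] at this
  have hAq : A *ᵥ q = (aq / p) • q + (t / r) • G := by
    have := expand2 hq0 hGne hort (A *ᵥ q)
    rwa [← haqdef, htsym, ← hpdef, ← hrdef] at this
  -- the quadratic identity for the inserted stepsize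
  set S := Real.sqrt ((aq / p - bg / r) ^ 2 + 4 * t ^ 2 / (p * r)) with hSdef
  have hDnn : 0 ≤ (aq / p - bg / r) ^ 2 + 4 * t ^ 2 / (p * r) :=
    add_nonneg (sq_nonneg _) (div_nonneg (by positivity) (mul_pos hp hr).le)
  have hS2 : S ^ 2 = (aq / p - bg / r) ^ 2 + 4 * t ^ 2 / (p * r) := Real.sq_sqrt hDnn
  have hS0 : 0 ≤ S := Real.sqrt_nonneg _
  have hden : 0 < aq / p + bg / r + S := by
    have := div_pos haq hp
    have := div_pos hbg hr
    linarith
  have hαd : α (m + 2) * (aq / p + bg / r + S) = 2 := by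
    rw [hαk₀]
    field_simp
  have hQ : ((aq / p) * (bg / r) - t ^ 2 / (p * r)) * α (m + 2) ^ 2
      - (aq / p + bg / r) * α (m + 2) + 1 = 0 := by
    have h2 : (((aq / p) * (bg / r) - t ^ 2 / (p * r)) * α (m + 2) ^ 2
        - (aq / p + bg / r) * α (m + 2) + 1) * (aq / p + bg / r + S) ^ 2 = 0 := by
      linear_combination (((aq / p) * (bg / r) - t ^ 2 / (p * r)) *
          (α (m + 2) * (aq / p + bg / r + S) + 2)
        - (aq / p + bg / r) * (aq / p + bg / r + S)) * hαd + hS2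
    exact (mul_eq_zero.1 h2).resolve_right (pow_ne_zero 2 hden.ne')
  -- coordinates of g (m+3) and A g(m+3)
  set X := -(α (m + 2)) * (t / p) with hXdef
  set Y := 1 - α (m + 2) * (bg / r) with hYdef
  have h3 : g (m + 3) = X • q + Y • G := by
    rw [hrec (m + 2), ← hGdef, hAG, hXdef, hYdef]
    module
  have h4 : A *ᵥ g (m + 3) =
      (X * (aq / p) + Y * (t / p)) • q + (X * (t / r) + Y * (bg / r)) • G := by
    rw [h3, mulVec_add, mulVec_smul, mulVec_smul, hAq, hAG]
    module
  have hcross : (X * (aq / p) + Y * (t / p)) * Y = X * (X * (t / r) + Y * (bg / r)) := by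
    rw [hXdef, hYdef]
    linear_combination (t / p) * hQ
  -- g (m+3) is an eigenvector of A
  have hXY : ¬(X = 0 ∧ Y = 0) := by
    rintro ⟨hX, hY⟩
    exact hhne (by rw [h3, hX, hY]; simp)
  obtain ⟨μ, hμ1, hμ2⟩ : ∃ μ, X * (aq / p) + Y * (t / p) = μ * X ∧
      X * (t / r) + Y * (bg / r) = μ * Y := by
    by_cases hX : X = 0
    · have hY : Y ≠ 0 := fun hY => hXY ⟨hX, hY⟩
      refine ⟨(X * (t / r) + Y * (bg / r)) / Y, ?_, (div_mul_cancel₀ _ hY).symm⟩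
      have hz : (X * (aq / p) + Y * (t / p)) * Y = 0 := by rw [hcross, hX]; ring
      have h0 : X * (aq / p) + Y * (t / p) = 0 := (mul_eq_zero.1 hz).resolve_right hY
      rw [h0, hX, mul_zero]
    · refine ⟨(X * (aq / p) + Y * (t / p)) / X, (div_mul_cancel₀ _ hX).symm, ?_⟩
      rw [div_mul_eq_mul_div, eq_div_iff hX]
      linear_combination -hcross
  have hμ : A *ᵥ g (m + 3) = μ • g (m + 3) := by
    rw [h4, h3, hμ1, hμ2]
    module
  -- μ > 0
  have hμpos : 0 < μ := by
    have h5 : 0 < g (m + 3) ⬝ᵥ (A *ᵥ g (m + 3)) := hpos _ hhne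
    rw [hμ, dotProduct_smul, smul_eq_mul] at h5
    have h6 : 0 < g (m + 3) ⬝ᵥ g (m + 3) := dp_self_pos hhne
    have h7 := div_pos h5 h6
    rwa [mul_div_assoc, div_self h6.ne', mul_one] at h7
  -- the BB1 step at m+4 equals 1/μ
  have hα4 : α (m + 4) = 1 / μ := by
    have h7 := hstep (m + 4) (by omega) (by omega) (by omega)
    have h8 : m + 4 - 1 = m + 3 := by omega
    rw [h8] at h7
    rw [h7, hμ, dotProduct_smul, smul_eq_mul]
    rw [div_mul_eq_div_div_swap, div_self (dp_self_pos hhne).ne']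
  -- g (m+4) is also an eigenvector with eigenvalue μ
  have h9 : g (m + 4) = (1 - α (m + 3) * μ) • g (m + 3) := by
    rw [hrec (m + 3), hμ]
    module
  have h10 : A *ᵥ g (m + 4) = μ • g (m + 4) := by
    rw [h9, mulVec_smul, hμ]
    module
  -- finish
  show g (m + 5) = 0
  rw [hrec (m + 4), h10, hα4, smul_smul, one_div, inv_mul_cancel₀ hμpos.ne', one_smul,
    sub_self]
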